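/- Let A = {α₁,…,α_p} with A = −A and β₁,…,β_q nonzero vectors in a Euclidean space. If the set P₁ = {α_i + ∑_{j=1}^q ε_j β_j : 1 ≤ i ≤ p, ε_j ∈ {±1}} is a subsystem of roots and q = 4, then α_i = 0 for all i. -/

import Mathlib

open RealInnerProductSpace

variable {V : Type*} [NormedAddCommGroup V] [InnerProductSpace ℝ V]

/-- A root system in a Euclidean space, without the spanning condition. -/
def IsRootSet (R : Set V) : Prop :=
  R.Finite ∧ (0 : V) ∉ R ∧
  (∀ α ∈ R, ∀ t : ℝ, t • α ∈ R → t = 1 ∨ t = -1) ∧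
  (∀ α ∈ R, ∀ β ∈ R, ∃ n : ℤ, 2 * ⟪α, β⟫ / ⟪α, α⟫ = (n : ℝ)) ∧
  (∀ α ∈ R, ∀ v ∈ R, v - (2 * ⟪α, v⟫ / ⟪α, α⟫) • α ∈ R)

/-- A root system: a finite spanning set, not containing `0`, with `±α` the only
multiples of each root, satisfying integrality and closed under reflections. -/
def IsRootSystem (R : Set V) : Prop :=
  IsRootSet R ∧ Submodule.span ℝ R = ⊤

/-- A subsystem of roots: a set spanning `V` contained in some root system of `V`. -/
def IsSubsystem (P : Set V) : Prop :=
  Submodule.span ℝ P = ⊤ ∧ ∃ R : Set V, IsRootSystem R ∧ P ⊆ R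

/-- The reflection closure of `P`: the minimal set containing `P` and closed under
the reflections `s_α` for `α` in it, i.e. the minimal root system `P̄` containing `P`. -/
inductive ReflClosure (P : Set V) : V → Prop
  | base : ∀ v ∈ P, ReflClosure P v
  | refl : ∀ α v, ReflClosure P α → ReflClosure P v →
      ReflClosure P (v - (2 * ⟪α, v⟫ / ⟪α, α⟫) • α)

/-- `P` is admissible if it is a subsystem of roots and `P̄ \ P` is a root system
(in the subspace it spans). -/
def IsAdmissible (P : Set V) : Prop :=
  IsSubsystem P ∧ IsRootSet ({v | ReflClosure P v} \ P)

/-- If `A = {α₁,…,α_p}` with `A = -A`, the `βⱼ` (`j = 1,…,4`) are nonzero, and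
`P₁ = {αᵢ + ∑ εⱼβⱼ}` is a subsystem of roots, then all `αᵢ = 0`. -/
theorem stmt_8 (p : ℕ) (hp : 0 < p) (α : Fin p → V) (β : Fin 4 → V)
    (hβ : ∀ j, β j ≠ 0) (hA : ∀ i, ∃ i', α i' = -α i)
    (hP : IsSubsystem {v : V | ∃ (i : Fin p) (ε : Fin 4 → ℝ),
      (∀ j, ε j = 1 ∨ ε j = -1) ∧ v = α i + ∑ j, ε j • β j}) :
    ∀ i, α i = 0 := by
  obtain ⟨hspan, R, ⟨⟨hfin, h0, hmult, hint, hrefl⟩, _⟩, hPR⟩ := hP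
  intro i
  obtain ⟨i', hi'⟩ := hA i
  set a := α i with ha
  -- sign function
  set sg : Bool → ℝ := fun b => if b then 1 else -1 with hsgdef
  have hsg : ∀ b, sg b = 1 ∨ sg b = -1 := by intro b; cases b <;> simp [hsgdef]
  have hsgsq : ∀ b, sg b * sg b = 1 := by intro b; cases b <;> norm_num [hsgdef]
  have hsgnot : ∀ b, sg (!b) = - sg b := by intro b; cases b <;> norm_num [hsgdef]
  have hself : ∀ x : V, x ≠ 0 → 0 < ⟪x, x⟫ := fun x hx => by
    rw [real_inner_self_eq_norm_sq]; exact pow_pos (norm_pos_iff.mpr hx) 2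
  -- the 32 vectors are all in R
  have hmem : ∀ (s : Bool) (t : Fin 4 → Bool),
      (sg s • a + ∑ j, sg (t j) • β j) ∈ R := by
    intro s t
    apply hPR
    cases s
    · refine ⟨i', fun j => sg (t j), fun j => hsg _, ?_⟩
      rw [hi']
      norm_num [hsgdef]
    · refine ⟨i, fun j => sg (t j), fun j => hsg _, ?_⟩
      norm_num [hsgdef]
      exact ha
  obtain ⟨⟨s₀, t₀⟩, hmax'⟩ := Finite.exists_max fun st : Bool × (Fin 4 → Bool) =>
    ⟪sg st.1 • a + ∑ j, sg (st.2 j) • β j, sg st.1 • a + ∑ j, sg (st.2 j) • β j⟫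
  set m : V := sg s₀ • a + ∑ j, sg (t₀ j) • β j with hmdef
  have hmax : ∀ (s : Bool) (t : Fin 4 → Bool),
      ⟪sg s • a + ∑ j, sg (t j) • β j, sg s • a + ∑ j, sg (t j) • β j⟫ ≤ ⟪m, m⟫ := by
    intro s t; exact hmax' (s, t)
  set M := ⟪m, m⟫ with hMdef
  have hmR : m ∈ R := hmem s₀ t₀
  have hm0 : m ≠ 0 := fun h => h0 (h ▸ hmR)
  have hMpos : 0 < M := hself m hm0
  -- the key lemma
  have key : ∀ c : V, m - (2:ℝ) • c ∈ R → ⟪m - (2:ℝ)•c, m - (2:ℝ)•c⟫ ≤ M →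
      ⟪c, c⟫ ≤ ⟪m, c⟫ ∧ (0 < ⟪c, c⟫ → M ≤ 4 * ⟪m, c⟫) := by
    intro c hcR hcle
    have hcm := real_inner_comm c m
    have hexp : ⟪m - (2:ℝ)•c, m - (2:ℝ)•c⟫ = M - 4 * ⟪m, c⟫ + 4 * ⟪c, c⟫ := by
      simp only [inner_sub_left, inner_sub_right, real_inner_smul_left,
        real_inner_smul_right, hcm, ← hMdef]
      ring
    have h1 : ⟪c, c⟫ ≤ ⟪m, c⟫ := by nlinarith [hcle, hexp]
    refine ⟨h1, fun hcpos => ?_⟩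
    obtain ⟨n, hn⟩ := hint m hmR _ hcR
    have hinner : ⟪m, m - (2:ℝ)•c⟫ = M - 2 * ⟪m, c⟫ := by
      simp only [inner_sub_right, real_inner_smul_right, ← hMdef]
    rw [hinner, ← hMdef] at hn
    have hM0 : M ≠ 0 := ne_of_gt hMpos
    have heq : 4 * ⟪m, c⟫ = (2 - (n:ℝ)) * M := by
      field_simp at hn
      nlinarith [hn]
    have hpos : 0 < (2 - (n:ℝ)) * M := by
      rw [← heq]; nlinarith [lt_of_lt_of_le hcpos h1]
    have h2n : 0 < 2 - (n:ℝ) := by nlinarith [hMpos]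
    have hn2 : n < 2 := by exact_mod_cast (show (n:ℝ) < 2 by linarith)
    have hn1 : (n:ℝ) ≤ 1 := by exact_mod_cast (show n ≤ 1 by omega)
    nlinarith [heq, hMpos]
  -- apply the key lemma to c = sg s₀ • a
  have hwa : m - (2:ℝ) • (sg s₀ • a) = sg (!s₀) • a + ∑ j, sg (t₀ j) • β j := by
    rw [hmdef, hsgnot s₀]
    module
  have hKa : ⟪a, a⟫ ≤ ⟪m, sg s₀ • a⟫ := by
    have h := key (sg s₀ • a) (hwa ▸ hmem (!s₀) t₀) (by rw [hwa]; exact hmax _ _)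
    have hca : ⟪sg s₀ • a, sg s₀ • a⟫ = ⟪a, a⟫ := by
      rw [real_inner_smul_left, real_inner_smul_right, ← mul_assoc, hsgsq, one_mul]
    linarith [h.1, hca.ge, hca.le]
  -- apply the key lemma to c = sg (t₀ j) • β j
  have hKb : ∀ j, M ≤ 4 * ⟪m, sg (t₀ j) • β j⟫ := by
    intro j
    have hflip : m - (2:ℝ) • (sg (t₀ j) • β j)
        = sg s₀ • a + ∑ j', sg (Function.update t₀ j (!t₀ j) j') • β j' := by
      have hsum : ∑ j', sg (Function.update t₀ j (!t₀ j) j') • β j'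
          = ∑ j', (sg (t₀ j') • β j' - (if j' = j then ((2 * sg (t₀ j)) • β j) else 0)) := by
        refine Finset.sum_congr rfl fun j' _ => ?_
        by_cases h : j' = j
        · subst h
          rw [if_pos rfl, Function.update_self, hsgnot, ← sub_smul]
          norm_num
          module
        · rw [if_neg h, Function.update_of_ne h, sub_zero]
      rw [hsum, Finset.sum_sub_distrib, Finset.sum_ite_eq' Finset.univ j
        (fun _ => (2 * sg (t₀ j)) • β j), if_pos (Finset.mem_univ j), hmdef, smul_smul]
      module
    have h := key (sg (t₀ j) • β j) (hflip ▸ hmem s₀ _) (by rw [hflip]; exact hmax _ _)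
    apply h.2
    rw [real_inner_smul_left, real_inner_smul_right, ← mul_assoc, hsgsq, one_mul]
    exact hself _ (hβ j)
  -- sum identity
  have hsum : M = ⟪m, sg s₀ • a⟫ + ∑ j, ⟪m, sg (t₀ j) • β j⟫ := by
    conv_lhs => rw [hMdef]
    nth_rewrite 2 [hmdef]
    rw [inner_add_right, inner_sum]
  have hsum4 : ∑ _j : Fin 4, M ≤ ∑ j, 4 * ⟪m, sg (t₀ j) • β j⟫ :=
    Finset.sum_le_sum fun j _ => hKb j
  have hconst : ∑ _j : Fin 4, M = 4 * M := by
    simp [Finset.sum_const, Finset.card_univ]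
  have hmul : ∑ j, 4 * ⟪m, sg (t₀ j) • β j⟫ = 4 * ∑ j, ⟪m, sg (t₀ j) • β j⟫ := by
    rw [Finset.mul_sum]
  have haa : ⟪a, a⟫ ≤ 0 := by
    rw [hconst, hmul] at hsum4
    linarith [hKa, hsum, hsum4]
  exact real_inner_self_nonpos.mp haa
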